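/- Let p be a prime with p ≡ 1 (mod 4), t, b positive integers with t² + 4 = b²p, 𝓕, 𝓛 the associated Lucas sequences, and m, n odd integers. Define the real numbers α = (𝓛_n𝓛_m + (𝓛_m𝓕_n − 2𝓕_m)·b·√p)/2 and α' = (𝓛_n𝓛_m − (𝓛_m𝓕_n − 2𝓕_m)·b·√p)/2. Then for every integer A: (α² − 4)(p + A√p) + (α'² − 4)(p − A√p) = (𝓕_n𝓛_m − 2𝓕_m)·b·p·𝓛_m·(bp𝓕_n + 𝓛_n·A), and likewise (α² − 4)(p − A√p) + (α'² − 4)(p + A√p) = (𝓕_n𝓛_m − 2𝓕_m)·b·p·𝓛_m·(bp𝓕_n − 𝓛_n·A). -/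

import Mathlib

theorem stmt_15 (p : ℕ) (hp : p.Prime) (hp4 : p % 4 = 1)
    (t b : ℤ) (ht : 0 < t) (hb : 0 < b)
    (hpt : t ^ 2 + 4 = b ^ 2 * (p : ℤ))
    (F L : ℤ → ℤ) (hF0 : F 0 = 0) (hF1 : F 1 = 1)
    (hF : ∀ k : ℤ, F (k + 2) = t * F (k + 1) + F k)
    (hL0 : L 0 = 2) (hL1 : L 1 = t)
    (hL : ∀ k : ℤ, L (k + 2) = t * L (k + 1) + L k)
    (m n : ℤ) (hm : Odd m) (hn : Odd n)
    (α α' : ℝ)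
    (hα : α = ((L n * L m : ℤ) + (L m * F n - 2 * F m : ℤ) * b * Real.sqrt p) / 2)
    (hα' : α' = ((L n * L m : ℤ) - (L m * F n - 2 * F m : ℤ) * b * Real.sqrt p) / 2) :
    ∀ A : ℤ,
      (α ^ 2 - 4) * ((p : ℝ) + (A : ℝ) * Real.sqrt p)
          + (α' ^ 2 - 4) * ((p : ℝ) - (A : ℝ) * Real.sqrt p)
        = ((F n * L m - 2 * F m : ℤ) : ℝ) * b * p * (L m : ℝ)
            * ((b : ℝ) * p * (F n : ℝ) + (L n : ℝ) * A) ∧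
      (α ^ 2 - 4) * ((p : ℝ) - (A : ℝ) * Real.sqrt p)
          + (α' ^ 2 - 4) * ((p : ℝ) + (A : ℝ) * Real.sqrt p)
        = ((F n * L m - 2 * F m : ℤ) : ℝ) * b * p * (L m : ℝ)
            * ((b : ℝ) * p * (F n : ℝ) - (L n : ℝ) * A) := by
  -- recurrences in shifted form
  have hF' : ∀ k : ℤ, F (k + 1 + 1) = t * F (k + 1) + F k := by
    intro k; rw [show k + 1 + 1 = k + 2 by ring]; exact hF k
  have hL' : ∀ k : ℤ, L (k + 1 + 1) = t * L (k + 1) + L k := by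
    intro k; rw [show k + 1 + 1 = k + 2 by ring]; exact hL k
  -- alternation of the Fibonacci-type form
  have hE : ∀ k : ℤ, F (k + 1 + 1) ^ 2 - t * F (k + 1 + 1) * F (k + 1) - F (k + 1) ^ 2
      = -(F (k + 1) ^ 2 - t * F (k + 1) * F k - F k ^ 2) := by
    intro k
    linear_combination (F (k + 1 + 1) + F k) * hF' k
  -- value at even indices
  have hG : ∀ j : ℤ, F (2 * j + 1) ^ 2 - t * F (2 * j + 1) * F (2 * j) - F (2 * j) ^ 2 = 1 := by
    intro j
    induction j using Int.induction_on with
    | zero => simp [hF0, hF1]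
    | succ j ih =>
        have e1 := hE (2 * j + 1)
        have e2 := hE (2 * j)
        rw [show (2 : ℤ) * (j + 1) + 1 = 2 * j + 1 + 1 + 1 by ring,
            show (2 : ℤ) * (j + 1) = 2 * j + 1 + 1 by ring]
        linear_combination e1 - e2 + ih
    | pred j ih =>
        have e1 := hE (2 * (-j - 1) + 1)
        have e2 := hE (2 * (-j - 1))
        rw [show (2 : ℤ) * (-(j : ℤ) - 1) + 1 = 2 * (-j - 1) + 1 by ring] at *
        have ih' : F (2 * (-j - 1) + 1 + 1 + 1) ^ 2
            - t * F (2 * (-j - 1) + 1 + 1 + 1) * F (2 * (-j - 1) + 1 + 1)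
            - F (2 * (-j - 1) + 1 + 1) ^ 2 = 1 := by
          rw [show (2 : ℤ) * (-j - 1) + 1 + 1 + 1 = 2 * (-(j : ℤ)) + 1 by ring,
              show (2 : ℤ) * (-j - 1) + 1 + 1 = 2 * (-(j : ℤ)) by ring]
          exact ih
        linear_combination ih' - e1 + e2
  -- value at odd indices
  have hodd : ∀ k : ℤ, Odd k → F (k + 1) ^ 2 - t * F (k + 1) * F k - F k ^ 2 = -1 := by
    rintro k ⟨j, rfl⟩
    have e := hE (2 * j)
    have g := hG j
    rw [show (2 : ℤ) * j + 1 = 2 * j + 1 by ring] at *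
    linear_combination e - g
  -- L in terms of F
  have hLF : ∀ k : ℤ, L k = 2 * F (k + 1) - t * F k := by
    have key : ∀ j : ℤ, (L j = 2 * F (j + 1) - t * F j) ∧
        (L (j + 1) = 2 * F (j + 1 + 1) - t * F (j + 1)) := by
      intro j
      induction j using Int.induction_on with
      | zero =>
          have hf2 : F 2 = t := by
            have h := hF 0
            rw [show (0 : ℤ) + 2 = 2 by norm_num, show (0 : ℤ) + 1 = 1 by norm_num,
              hF0, hF1] at h
            linarith
          constructor
          · rw [show (0 : ℤ) + 1 = 1 by norm_num, hL0, hF0, hF1]; ring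
          · rw [show (0 : ℤ) + 1 + 1 = 2 by norm_num, show (0 : ℤ) + 1 = 1 by norm_num,
              hL1, hF1, hf2]; ring
      | succ j ih =>
          obtain ⟨ih1, ih2⟩ := ih
          refine ⟨by rw [show (j : ℤ) + 1 = j + 1 by ring]; exact ih2, ?_⟩
          rw [show (j : ℤ) + 1 + 1 = j + 1 + 1 by ring]
          rw [hL' j, hF' (j + 1)]
          linear_combination t * ih2 + ih1 + t * hF' j
      | pred j ih =>
          obtain ⟨ih1, ih2⟩ := ih
          have hfl : L (-(j : ℤ) - 1) = L (-j + 1) - t * L (-j) := by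
            have := hL' (-(j : ℤ) - 1)
            rw [show -(j : ℤ) - 1 + 1 + 1 = -j + 1 by ring, show -(j : ℤ) - 1 + 1 = -j by ring] at this
            linarith
          have hff : F (-(j : ℤ)) = F (-j + 1 + 1) - t * F (-j + 1) := by
            have := hF' (-(j : ℤ))
            linarith
          have hff2 : F (-(j : ℤ) - 1) = F (-j + 1) - t * F (-j) := by
            have := hF' (-(j : ℤ) - 1)
            rw [show -(j : ℤ) - 1 + 1 + 1 = -j + 1 by ring, show -(j : ℤ) - 1 + 1 = -j by ring] at this
            linarith
          constructor
          · rw [show -(j : ℤ) - 1 + 1 = -j by ring]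
            linear_combination hfl + ih2 - t * ih1 + t * hff2 - 2 * hff
          · rw [show -(j : ℤ) - 1 + 1 = -j by ring]
            exact ih1
    exact fun k => (key k).1
  -- the quadratic identity for L at odd indices
  have hLsq : ∀ k : ℤ, Odd k → L k ^ 2 - (t ^ 2 + 4) * F k ^ 2 = -4 := by
    intro k hk
    have h1 := hodd k hk
    have h2 := hLF k
    linear_combination 4 * h1 + (L k + 2 * F (k + 1) - t * F k) * h2
  have h1 := hLsq n hn
  have h2 := hLsq m hm
  -- the key integer identity
  have key : (L n * L m) ^ 2 + (L m * F n - 2 * F m) ^ 2 * (b ^ 2 * (p : ℤ))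
      = 16 + 2 * (L m * F n - 2 * F m) * (b ^ 2 * (p : ℤ)) * L m * F n := by
    linear_combination (L m ^ 2) * h1 - 4 * h2 + (L m ^ 2 * F n ^ 2 - 4 * F m ^ 2) * hpt
  intro A
  have hs : Real.sqrt p * Real.sqrt p = (p : ℝ) :=
    Real.mul_self_sqrt (by positivity)
  have keyR : ((L n : ℝ) * L m) ^ 2 + ((L m : ℝ) * F n - 2 * F m) ^ 2 * ((b : ℝ) ^ 2 * p)
      = 16 + 2 * ((L m : ℝ) * F n - 2 * F m) * ((b : ℝ) ^ 2 * p) * L m * F n := by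
    exact_mod_cast congrArg (fun z : ℤ => (z : ℝ)) key
  subst hα hα'
  constructor
  · push_cast
    linear_combination
      (((L n : ℝ) * L m) * (((L m : ℝ) * F n - 2 * F m) * b) * A
        + (((L m : ℝ) * F n - 2 * F m) * b) ^ 2 * p / 2) * hs
      + ((p : ℝ) / 2) * keyR
  · push_cast
    linear_combination
      (-(((L n : ℝ) * L m) * (((L m : ℝ) * F n - 2 * F m) * b) * A)
        + (((L m : ℝ) * F n - 2 * F m) * b) ^ 2 * p / 2) * hs
      + ((p : ℝ) / 2) * keyR
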